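/- Let x∞ ∈ (0,∞)ⁿ be a complex-balanced equilibrium of a reaction network with reactions (y_a → y'_a, k^a), a = 1,…,N. Then a vector x* ∈ (0,∞)ⁿ is a complex-balanced equilibrium of the same network if and only if x*^{y_a} / x*^{y'_a} = x∞^{y_a} / x∞^{y'_a} for all a = 1,…,N. -/
import Mathlib

open Classical in
/-- `x` is a complex-balanced equilibrium of the network with reactions
`(y a → y' a, k a)`: for every complex `c`, the total inflow balances the
total outflow. -/
noncomputable def IsComplexBalanced (n N : ℕ) (y y' : Fin N → Fin n → ℝ)
    (k : Fin N → ℝ) (x : Fin n → ℝ) : Prop :=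
  ∀ c : Fin n → ℝ,
    ∑ a ∈ Finset.univ.filter (fun a => y a = c), k a * ∏ i, x i ^ y a i =
    ∑ b ∈ Finset.univ.filter (fun b => y' b = c), k b * ∏ i, x i ^ y b i

open Classical in
lemma cb_regroup {n N : ℕ} (y y' : Fin N → Fin n → ℝ) (k : Fin N → ℝ)
    (x : Fin n → ℝ) (hcb : IsComplexBalanced n N y y' k x)
    (g : (Fin n → ℝ) → ℝ) :
    ∑ a, k a * (∏ i, x i ^ y a i) * g (y' a) =
    ∑ a, k a * (∏ i, x i ^ y a i) * g (y a) := by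
  set C : Finset (Fin n → ℝ) := Finset.image y Finset.univ ∪ Finset.image y' Finset.univ with hC
  have hmem : ∀ a : Fin N, y a ∈ C ∧ y' a ∈ C := fun a => by
    constructor <;> simp [hC]
  calc ∑ a, k a * (∏ i, x i ^ y a i) * g (y' a)
      = ∑ c ∈ C, ∑ a ∈ Finset.univ.filter (fun a => y' a = c),
          k a * (∏ i, x i ^ y a i) * g (y' a) :=
        (Finset.sum_fiberwise_of_maps_to (fun a _ => (hmem a).2) _).symm
    _ = ∑ c ∈ C, g c * ∑ a ∈ Finset.univ.filter (fun a => y' a = c),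
          k a * (∏ i, x i ^ y a i) := by
        refine Finset.sum_congr rfl fun c _ => ?_
        rw [Finset.mul_sum]
        refine Finset.sum_congr rfl fun a ha => ?_
        have h := (Finset.mem_filter.mp ha).2
        rw [h]; ring
    _ = ∑ c ∈ C, g c * ∑ a ∈ Finset.univ.filter (fun a => y a = c),
          k a * (∏ i, x i ^ y a i) := by
        refine Finset.sum_congr rfl fun c _ => ?_
        rw [hcb c]
    _ = ∑ c ∈ C, ∑ a ∈ Finset.univ.filter (fun a => y a = c),
          k a * (∏ i, x i ^ y a i) * g (y a) := by
        refine Finset.sum_congr rfl fun c _ => ?_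
        rw [Finset.mul_sum]
        refine Finset.sum_congr rfl fun a ha => ?_
        have h := (Finset.mem_filter.mp ha).2
        rw [h]; ring
    _ = ∑ a, k a * (∏ i, x i ^ y a i) * g (y a) :=
        Finset.sum_fiberwise_of_maps_to (fun a _ => (hmem a).1) _

lemma mono_eq {n : ℕ} (x z : Fin n → ℝ) (hx : ∀ i, 0 < x i) (hz : ∀ i, 0 < z i)
    (c : Fin n → ℝ) :
    ∏ i, z i ^ c i =
      (∏ i, x i ^ c i) * Real.exp (∑ i, c i * (Real.log (z i) - Real.log (x i))) := by
  have h1 : ∀ (w : Fin n → ℝ), (∀ i, 0 < w i) →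
      ∏ i, w i ^ c i = Real.exp (∑ i, c i * Real.log (w i)) := by
    intro w hw
    rw [Real.exp_sum]
    exact Finset.prod_congr rfl fun i _ => by
      rw [Real.rpow_def_of_pos (hw i), mul_comm]
  rw [h1 z hz, h1 x hx, ← Real.exp_add]
  congr 1
  rw [← Finset.sum_add_distrib]
  exact Finset.sum_congr rfl fun i _ => by ring

theorem complex_balanced_characterization (n N : ℕ) (y y' : Fin N → Fin n → ℝ)
    (hy : ∀ a i, 0 ≤ y a i) (hy' : ∀ a i, 0 ≤ y' a i)
    (k : Fin N → ℝ) (hk : ∀ a, 0 < k a)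
    (xinf : Fin n → ℝ) (hxinf : ∀ i, 0 < xinf i)
    (hcb : IsComplexBalanced n N y y' k xinf)
    (xs : Fin n → ℝ) (hxs : ∀ i, 0 < xs i) :
    IsComplexBalanced n N y y' k xs ↔
      ∀ a, (∏ i, xs i ^ y a i) / (∏ i, xs i ^ y' a i) =
        (∏ i, xinf i ^ y a i) / (∏ i, xinf i ^ y' a i) := by
  classical
  set μ : Fin n → ℝ := fun i => Real.log (xs i) - Real.log (xinf i) with hμ
  have hmono : ∀ c : Fin n → ℝ,
      ∏ i, xs i ^ c i = (∏ i, xinf i ^ c i) * Real.exp (∑ i, c i * μ i) :=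
    fun c => mono_eq xinf xs hxinf hxs c
  have hmpos : ∀ c : Fin n → ℝ, 0 < ∏ i, xinf i ^ c i := fun c =>
    Finset.prod_pos fun i _ => Real.rpow_pos_of_pos (hxinf i) _
  -- the ratio condition is equivalent to equality of the dot products
  have hratdot : ∀ a : Fin N,
      ((∏ i, xs i ^ y a i) / (∏ i, xs i ^ y' a i) =
        (∏ i, xinf i ^ y a i) / (∏ i, xinf i ^ y' a i)) ↔
      ∑ i, y a i * μ i = ∑ i, y' a i * μ i := by
    intro a
    rw [hmono (y a), hmono (y' a)]
    rw [div_eq_div_iff (mul_pos (hmpos _) (Real.exp_pos _)).ne' (hmpos _).ne']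
    constructor
    · intro h
      have hPQ : (0:ℝ) < (∏ i, xinf i ^ y a i) * ∏ i, xinf i ^ y' a i :=
        mul_pos (hmpos _) (hmpos _)
      have h2 : Real.exp (∑ i, y a i * μ i) = Real.exp (∑ i, y' a i * μ i) := by
        have h3 : Real.exp (∑ i, y a i * μ i) *
            ((∏ i, xinf i ^ y a i) * ∏ i, xinf i ^ y' a i) =
            Real.exp (∑ i, y' a i * μ i) *
            ((∏ i, xinf i ^ y a i) * ∏ i, xinf i ^ y' a i) := by
          linear_combination h
        exact mul_right_cancel₀ hPQ.ne' h3
      exact Real.exp_injective h2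
    · intro h; rw [h]; ring
  constructor
  · -- forward direction: entropy dissipation argument
    intro hcbs a
    rw [hratdot a]
    set A : Fin N → ℝ := fun b => ∑ i, y b i * μ i with hA
    set B : Fin N → ℝ := fun b => ∑ i, y' b i * μ i with hB
    set w : Fin N → ℝ := fun b => k b * ∏ i, xinf i ^ y b i with hw
    have hwpos : ∀ b, 0 < w b := fun b => mul_pos (hk b) (hmpos _)
    have hterm : ∀ b : Fin N, 0 ≤ w b * (Real.exp (B b) - Real.exp (A b)
        - Real.exp (A b) * (B b - A b)) := by
      intro b
      have h1 : (B b - A b) + 1 ≤ Real.exp (B b - A b) := Real.add_one_le_exp _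
      have h2 : Real.exp (A b) * ((B b - A b) + 1) ≤
          Real.exp (A b) * Real.exp (B b - A b) :=
        mul_le_mul_of_nonneg_left h1 (Real.exp_pos _).le
      rw [← Real.exp_add] at h2
      have h3 : A b + (B b - A b) = B b := by ring
      rw [h3] at h2
      nlinarith [hwpos b]
    have hsum1 : ∑ b, w b * Real.exp (B b) = ∑ b, w b * Real.exp (A b) :=
      cb_regroup y y' k xinf hcb (fun c => Real.exp (∑ i, c i * μ i))
    have hsum2 : ∑ b, w b * Real.exp (A b) * (B b - A b) = 0 := by
      have h1 : ∀ b, w b * Real.exp (A b) = k b * ∏ i, xs i ^ y b i := by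
        intro b; rw [hmono (y b)]; ring
      have h2 : ∑ b, (k b * ∏ i, xs i ^ y b i) * B b
          = ∑ b, (k b * ∏ i, xs i ^ y b i) * A b :=
        cb_regroup y y' k xs hcbs (fun c => ∑ i, c i * μ i)
      calc ∑ b, w b * Real.exp (A b) * (B b - A b)
          = ∑ b, ((k b * ∏ i, xs i ^ y b i) * B b
              - (k b * ∏ i, xs i ^ y b i) * A b) := by
            refine Finset.sum_congr rfl fun b _ => ?_
            rw [h1 b]; ring
        _ = 0 := by rw [Finset.sum_sub_distrib, h2, sub_self]
    have hsum0 : ∑ b, w b * (Real.exp (B b) - Real.exp (A b)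
        - Real.exp (A b) * (B b - A b)) = 0 := by
      have : ∑ b, w b * (Real.exp (B b) - Real.exp (A b)
          - Real.exp (A b) * (B b - A b))
          = (∑ b, w b * Real.exp (B b)) - (∑ b, w b * Real.exp (A b))
            - ∑ b, w b * Real.exp (A b) * (B b - A b) := by
        rw [← Finset.sum_sub_distrib, ← Finset.sum_sub_distrib]
        exact Finset.sum_congr rfl fun b _ => by ring
      rw [this, hsum1, hsum2, sub_self, sub_zero]
    have heach := (Finset.sum_eq_zero_iff_of_nonneg
      (fun b _ => hterm b)).mp hsum0 a (Finset.mem_univ a)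
    by_contra hne
    have hne' : B a - A a ≠ 0 := fun h => hne (by linarith [sub_eq_zero.mp h])
    have hlt : (B a - A a) + 1 < Real.exp (B a - A a) := Real.add_one_lt_exp hne'
    have h2 : Real.exp (A a) * ((B a - A a) + 1) <
        Real.exp (A a) * Real.exp (B a - A a) :=
      (mul_lt_mul_iff_right₀ (Real.exp_pos _)).mpr hlt
    rw [← Real.exp_add] at h2
    have h3 : A a + (B a - A a) = B a := by ring
    rw [h3] at h2
    nlinarith [hwpos a]
  · -- backward direction
    intro hrat c
    have hdot : ∀ b : Fin N, ∑ i, y b i * μ i = ∑ i, y' b i * μ i :=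
      fun b => (hratdot b).mp (hrat b)
    have hL : ∑ a ∈ Finset.univ.filter (fun a => y a = c), k a * ∏ i, xs i ^ y a i
        = (∑ a ∈ Finset.univ.filter (fun a => y a = c), k a * ∏ i, xinf i ^ y a i)
            * Real.exp (∑ i, c i * μ i) := by
      rw [Finset.sum_mul]
      refine Finset.sum_congr rfl fun a ha => ?_
      have h := (Finset.mem_filter.mp ha).2
      rw [hmono (y a), h]; ring
    have hR : ∑ b ∈ Finset.univ.filter (fun b => y' b = c), k b * ∏ i, xs i ^ y b i
        = (∑ b ∈ Finset.univ.filter (fun b => y' b = c), k b * ∏ i, xinf i ^ y b i)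
            * Real.exp (∑ i, c i * μ i) := by
      rw [Finset.sum_mul]
      refine Finset.sum_congr rfl fun b hb => ?_
      have h := (Finset.mem_filter.mp hb).2
      rw [hmono (y b), hdot b, h]; ring
    rw [hL, hR, hcb c]
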